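/- Let (𝒞,𝒳,𝒟) be a localization triple in an additive category 𝒜. For any morphism f: A → B in 𝒜 there exists a morphism f̂: R(A) → R(B) such that f̂ ∘ j^A = j^B ∘ f. Moreover, if g: A → B satisfies ḡ = f̄ in 𝒜/𝒳 and ĝ: R(A) → R(B) satisfies ĝ ∘ j^A = j^B ∘ g, then f̂ − ĝ factors through an object of 𝒳, i.e. the class of f̂ in the stable category is uniquely determined by f̄. -/
import Mathlib


open CategoryTheory CategoryTheory.Limits

universe w' w v u

namespace LiHomotopy

variable {𝒜 : Type u} [Category.{v} 𝒜] [Preadditive 𝒜] [HasZeroObject 𝒜]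
  [HasBinaryBiproducts 𝒜]

/-- `f` factors through an object belonging to `X`. -/
def FactorsThruSet (X : Set 𝒜) {A B : 𝒜} (f : A ⟶ B) : Prop :=
  ∃ (M : 𝒜) (_ : M ∈ X) (u : A ⟶ M) (v : M ⟶ B), f = u ≫ v

/-- A localization triple `(C, X, D)` in an additive category `𝒜`, consisting of
full additive subcategories `X ⊆ C ∩ D` together with the chosen approximation
sequences of Definition 3.2. -/
structure LocalizationTriple (C X D : Set 𝒜) where
  X_sub_C : X ⊆ C
  X_sub_D : X ⊆ D
  C_zero : ∀ Z : 𝒜, IsZero Z → Z ∈ C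
  C_sum : ∀ {M N : 𝒜}, M ∈ C → N ∈ C → (M ⊞ N) ∈ C
  X_zero : ∀ Z : 𝒜, IsZero Z → Z ∈ X
  X_sum : ∀ {M N : 𝒜}, M ∈ X → N ∈ X → (M ⊞ N) ∈ X
  D_zero : ∀ Z : 𝒜, IsZero Z → Z ∈ D
  D_sum : ∀ {M N : 𝒜}, M ∈ D → N ∈ D → (M ⊞ N) ∈ D
  /-- the chosen `C`-precover `Q(A) → A` -/
  Qobj : 𝒜 → 𝒜
  Wl : 𝒜 → 𝒜
  r : ∀ A : 𝒜, Qobj A ⟶ A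
  ω : ∀ A : 𝒜, Wl A ⟶ Qobj A
  Qobj_mem : ∀ A : 𝒜, Qobj A ∈ C
  r_precover : ∀ (A C' : 𝒜), C' ∈ C → ∀ g : C' ⟶ A, ∃ h : C' ⟶ Qobj A, h ≫ r A = g
  ω_r : ∀ A : 𝒜, ω A ≫ r A = 0
  ω_weakKernel : ∀ (A T : 𝒜) (g : T ⟶ Qobj A), g ≫ r A = 0 → ∃ h : T ⟶ Wl A, h ≫ ω A = g
  Wl_perp : ∀ (A C' : 𝒜), C' ∈ C → ∀ g : C' ⟶ Wl A, FactorsThruSet X g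
  /-- the chosen `D`-preenvelope `A → R(A)` -/
  Robj : 𝒜 → 𝒜
  Wr : 𝒜 → 𝒜
  j : ∀ A : 𝒜, A ⟶ Robj A
  τ : ∀ A : 𝒜, Robj A ⟶ Wr A
  Robj_mem : ∀ A : 𝒜, Robj A ∈ D
  j_preenvelope : ∀ (A D' : 𝒜), D' ∈ D → ∀ g : A ⟶ D', ∃ h : Robj A ⟶ D', j A ≫ h = g
  j_τ : ∀ A : 𝒜, j A ≫ τ A = 0
  τ_weakCokernel : ∀ (A T : 𝒜) (g : Robj A ⟶ T), j A ≫ g = 0 → ∃ h : Wr A ⟶ T, τ A ≫ h = g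
  Wr_perp : ∀ (A D' : 𝒜), D' ∈ D → ∀ g : Wr A ⟶ D', FactorsThruSet X g
  Qobj_mem_of_D : ∀ A : 𝒜, A ∈ D → Qobj A ∈ C ∩ D
  Robj_mem_of_C : ∀ A : 𝒜, A ∈ C → Robj A ∈ C ∩ D

/-- The class `𝒮` of morphisms `s` such that `R(Q(s̄))` is an isomorphism in the
stable category of `C ∩ D` modulo `X`, expressed via representatives. -/
def SClass {C X D : Set 𝒜} (L : LocalizationTriple C X D) : MorphismProperty 𝒜 :=
  fun A B s =>
    ∃ (sc : L.Qobj A ⟶ L.Qobj B) (sf : L.Robj (L.Qobj A) ⟶ L.Robj (L.Qobj B)),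
      sc ≫ L.r B = L.r A ≫ s ∧
      L.j (L.Qobj A) ≫ sf = sc ≫ L.j (L.Qobj B) ∧
      ∃ g : L.Robj (L.Qobj B) ⟶ L.Robj (L.Qobj A),
        FactorsThruSet X (sf ≫ g - 𝟙 _) ∧ FactorsThruSet X (g ≫ sf - 𝟙 _)

theorem freplacement_exists_and_unique {C X D : Set 𝒜} (L : LocalizationTriple C X D)
    {A B : 𝒜} (f : A ⟶ B) :
    (∃ fhat : L.Robj A ⟶ L.Robj B, L.j A ≫ fhat = f ≫ L.j B) ∧
    (∀ (g : A ⟶ B) (fhat ghat : L.Robj A ⟶ L.Robj B),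
      FactorsThruSet X (f - g) →
      L.j A ≫ fhat = f ≫ L.j B → L.j A ≫ ghat = g ≫ L.j B →
      FactorsThruSet X (fhat - ghat)) := by
  constructor
  · exact L.j_preenvelope A (L.Robj B) (L.Robj_mem B) (f ≫ L.j B)
  · intro g fhat ghat hfg hf hg
    obtain ⟨M, hM, u, v, huv⟩ := hfg
    obtain ⟨u', hu'⟩ := L.j_preenvelope A M (L.X_sub_D hM) u
    have hzero : L.j A ≫ (fhat - ghat - u' ≫ v ≫ L.j B) = 0 := by
      simp only [Preadditive.comp_sub]
      rw [hf, hg, ← Category.assoc, hu', ← Category.assoc, ← huv]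
      simp [Preadditive.sub_comp]
    obtain ⟨h, hh⟩ := L.τ_weakCokernel A (L.Robj B) _ hzero
    obtain ⟨M', hM', p, q, hpq⟩ := L.Wr_perp A (L.Robj B) (L.Robj_mem B) h
    refine ⟨M ⊞ M', L.X_sum hM hM', biprod.lift u' (L.τ A ≫ p),
      biprod.desc (v ≫ L.j B) q, ?_⟩
    have : fhat - ghat = u' ≫ v ≫ L.j B + L.τ A ≫ h := by
      rw [hh]; abel
    rw [this, hpq]
    simp

end LiHomotopy
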